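/- In the semilinear stratification setting: for every K ⊆ I and L ⊆ J, the set σ_{K,L} is a locally closed subset of ℝ^S, i.e., it is the intersection of an open subset and a closed subset of ℝ^S. (Part of assertion (1) of Lemma 4.7: each σ_{K,L} is obtained as the intersection of an open set with a finite union of linear subspaces.) -/

import Mathlib

/-- The negative part `|t|_- = max(-t, 0)` of a real number. -/
def negPartR (t : ℝ) : ℝ := max (-t) 0

/-- `α(u) = max( max_{i∈I} |u_i| , max_{j∈J} |u_j|_- )` (both inner maxima padded by `0`,
which is harmless since all terms are nonnegative). -/
noncomputable def alphaFn {ι : Type*} (I J : Finset ι) (u : ι → ℝ) : ℝ :=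
  max (I.fold max 0 fun i => |u i|) (J.fold max 0 fun j => negPartR (u j))

/-- `Ω = ⋃_{i∈I} {u : u_i ≠ 0} ∪ ⋃_{j∈J} {u : u_j < 0}`. -/
def OmegaSet {ι : Type*} (I J : Finset ι) : Set (ι → ℝ) :=
  {u | (∃ i ∈ I, u i ≠ 0) ∨ (∃ j ∈ J, u j < 0)}

/-- The stratum `σ_{K,L}`. -/
noncomputable def sigmaSet {ι : Type*} (I J K L : Finset ι) : Set (ι → ℝ) :=
  {u | u ∈ OmegaSet I J ∧ (∀ i ∈ I, (i ∈ K ↔ alphaFn I J u = |u i|)) ∧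
    (∀ j ∈ J, (j ∈ L ↔ alphaFn I J u = negPartR (u j)))}

lemma cont_fold {ι : Type*} (s : Finset ι) (g : ι → (ι → ℝ) → ℝ)
    (hg : ∀ i, Continuous (g i)) :
    Continuous fun u => s.fold max 0 (fun i => g i u) := by
  classical
  induction s using Finset.induction_on with
  | empty => simpa using continuous_const
  | insert _ _ h ih =>
    simp only [Finset.fold_insert h]
    exact (hg _).max ih

lemma cont_alpha {ι : Type*} (I J : Finset ι) : Continuous (alphaFn I J) := by
  apply Continuous.max
  · exact cont_fold I (fun i u => |u i|) fun i => (continuous_apply i).abs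
  · exact cont_fold J (fun j u => negPartR (u j)) fun j =>
      ((continuous_apply j).neg).max continuous_const

lemma omega_open {ι : Type*} [Fintype ι] (I J : Finset ι) :
    IsOpen (OmegaSet I J) := by
  have : OmegaSet I J =
      (⋃ i ∈ I, {u : ι → ℝ | u i ≠ 0}) ∪ (⋃ j ∈ J, {u : ι → ℝ | u j < 0}) := by
    ext u; simp [OmegaSet]
  rw [this]
  apply IsOpen.union
  · exact isOpen_biUnion fun i _ =>
      isOpen_ne_fun (continuous_apply i) continuous_const
  · exact isOpen_biUnion fun j _ =>
      isOpen_lt (continuous_apply j) continuous_const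

/-- part of assertion (1) of Lemma 4.7.  In the semilinear
stratification setting, each stratum `σ_{K,L}` is a locally closed subset of `ℝ^S`,
i.e., it is the intersection of an open subset and a closed subset of `ℝ^S`. -/
theorem sigmaSet_locallyClosed
    {ι : Type*} [Fintype ι] [DecidableEq ι] [Nonempty ι]
    (I J : Finset ι) (hIJ : Disjoint I J) (hIJunion : I ∪ J = Finset.univ)
    (K L : Finset ι) (hK : K ⊆ I) (hL : L ⊆ J) :
    ∃ U F : Set (ι → ℝ), IsOpen U ∧ IsClosed F ∧ sigmaSet I J K L = U ∩ F := by
  classical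
  refine ⟨OmegaSet I J ∩ (⋂ i ∈ (I \ K), {u : ι → ℝ | alphaFn I J u ≠ |u i|}) ∩
      (⋂ j ∈ (J \ L), {u : ι → ℝ | alphaFn I J u ≠ negPartR (u j)}),
    (⋂ i ∈ K, {u : ι → ℝ | alphaFn I J u = |u i|}) ∩
      (⋂ j ∈ L, {u : ι → ℝ | alphaFn I J u = negPartR (u j)}), ?_, ?_, ?_⟩
  · refine IsOpen.inter (IsOpen.inter (omega_open I J) ?_) ?_
    · exact isOpen_biInter_finset fun i _ =>
        isOpen_ne_fun (cont_alpha I J) ((continuous_apply i).abs)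
    · exact isOpen_biInter_finset fun j _ =>
        isOpen_ne_fun (cont_alpha I J)
          (((continuous_apply j).neg).max continuous_const)
  · refine IsClosed.inter ?_ ?_
    · exact isClosed_biInter fun i _ =>
        isClosed_eq (cont_alpha I J) ((continuous_apply i).abs)
    · exact isClosed_biInter fun j _ =>
        isClosed_eq (cont_alpha I J)
          (((continuous_apply j).neg).max continuous_const)
  · ext u
    simp only [sigmaSet, Set.mem_setOf_eq, Set.mem_inter_iff, Set.mem_iInter,
      Finset.mem_sdiff]
    constructor
    · rintro ⟨hΩ, hI, hJ⟩
      refine ⟨⟨⟨hΩ, ?_⟩, ?_⟩, ?_, ?_⟩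
      · rintro i ⟨hiI, hiK⟩
        exact fun h => hiK ((hI i hiI).2 h)
      · rintro j ⟨hjJ, hjL⟩
        exact fun h => hjL ((hJ j hjJ).2 h)
      · exact fun i hiK => (hI i (hK hiK)).1 hiK
      · exact fun j hjL => (hJ j (hL hjL)).1 hjL
    · rintro ⟨⟨⟨hΩ, hIne⟩, hJne⟩, hKeq, hLeq⟩
      refine ⟨hΩ, ?_, ?_⟩
      · intro i hiI
        constructor
        · exact fun h => hKeq i h
        · intro h
          by_contra hiK
          exact hIne i ⟨hiI, hiK⟩ h
      · intro j hjJ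
        constructor
        · exact fun h => hLeq j h
        · intro h
          by_contra hjL
          exact hJne j ⟨hjJ, hjL⟩ h
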